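/- Let A and B be unital complex C*-algebras, each simple as a ring (its only two-sided ideals are 0 and the whole algebra). Then the algebraic tensor product A ⊗_ℂ B is a simple ring. -/

import Mathlib

set_option synthInstance.maxHeartbeats 1000000
set_option maxHeartbeats 1000000

open TensorProduct

/-- In a simple unital ring, `1` is a finite sum of `c * a * d` for any nonzero `a`. -/
lemma exists_list_sum_eq_one' {A : Type*} [Ring A] [IsSimpleRing A] {a : A} (ha : a ≠ 0) :
    ∃ l : List (A × A), (l.map fun p => p.1 * a * p.2).sum = 1 := by
  classical
  let T : Set A := {z | ∃ l : List (A × A), (l.map fun p => p.1 * a * p.2).sum = z}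
  let I : TwoSidedIdeal A := TwoSidedIdeal.mk' T
    ⟨[], by simp⟩
    (by rintro x y ⟨l1, rfl⟩ ⟨l2, rfl⟩; exact ⟨l1 ++ l2, by simp⟩)
    (by
      rintro x ⟨l, rfl⟩
      refine ⟨l.map fun p => (-p.1, p.2), ?_⟩
      induction l with
      | nil => simp
      | cons p l ih =>
        simp only [List.map_cons, List.sum_cons, ih, neg_mul, neg_add])
    (by
      rintro x y ⟨l, rfl⟩
      refine ⟨l.map fun p => (x * p.1, p.2), ?_⟩
      induction l with
      | nil => simp
      | cons p l ih =>
        simp only [List.map_cons, List.sum_cons, ih, mul_add]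
        congr 1
        simp [mul_assoc])
    (by
      rintro x y ⟨l, rfl⟩
      refine ⟨l.map fun p => (p.1, p.2 * y), ?_⟩
      induction l with
      | nil => simp
      | cons p l ih =>
        simp only [List.map_cons, List.sum_cons, ih, add_mul]
        congr 1
        simp [mul_assoc])
  have haI : a ∈ I := by
    rw [TwoSidedIdeal.mem_mk']
    exact ⟨[(1, 1)], by simp⟩
  have h1 := IsSimpleRing.one_mem_of_ne_zero_mem I ha haI
  rwa [TwoSidedIdeal.mem_mk'] at h1

lemma TwoSidedIdeal.list_sum_mem' {R : Type*} [NonUnitalNonAssocRing R] (I : TwoSidedIdeal R)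
    (l : List R) (h : ∀ r ∈ l, r ∈ I) : l.sum ∈ I := by
  induction l with
  | nil => simpa using I.zero_mem
  | cons r l ih =>
    simp only [List.sum_cons]
    exact I.add_mem (h r (by simp)) (ih fun r hr => h r (by simp [hr]))

/-- The tensor product over a field of a central simple algebra with a simple algebra is
simple. -/
theorem isSimpleRing_tensor_aux (K A B : Type*) [Field K] [Ring A] [Algebra K A]
    [Ring B] [Algebra K B] (hA : IsSimpleRing A) (hB : IsSimpleRing B)
    (hcentral : ∀ a : A, (∀ c : A, a * c = c * a) → ∃ k : K, a = algebraMap K A k) :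
    IsSimpleRing (A ⊗[K] B) := by
  classical
  let ι := Module.Basis.ofVectorSpaceIndex K B
  let 𝒷 : Module.Basis ι K B := Module.Basis.ofVectorSpace K B
  let e : A ⊗[K] B ≃ₗ[K] (ι →₀ A) :=
    (TensorProduct.congr (LinearEquiv.refl K A) 𝒷.repr).trans
      (TensorProduct.finsuppScalarRight K K A ι)
  have E1 : ∀ (a : A) (b : B) (i : ι), e (a ⊗ₜ[K] b) i = 𝒷.repr b i • a := by
    intro a b i
    simp [e, TensorProduct.finsuppScalarRight_apply_tmul_apply]
  have E2 : ∀ (a : A) (x : A ⊗[K] B) (i : ι), e ((a ⊗ₜ[K] (1 : B)) * x) i = a * e x i := by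
    intro a x i
    induction x using TensorProduct.induction_on with
    | zero => simp
    | tmul a' b' =>
      rw [Algebra.TensorProduct.tmul_mul_tmul, E1, E1, one_mul, mul_smul_comm]
    | add x y hx hy => rw [mul_add, map_add, map_add, Finsupp.add_apply, Finsupp.add_apply,
        hx, hy, mul_add]
  have E3 : ∀ (a : A) (x : A ⊗[K] B) (i : ι), e (x * (a ⊗ₜ[K] (1 : B))) i = e x i * a := by
    intro a x i
    induction x using TensorProduct.induction_on with
    | zero => simp
    | tmul a' b' =>
      rw [Algebra.TensorProduct.tmul_mul_tmul, E1, E1, mul_one, smul_mul_assoc]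
    | add x y hx hy => rw [add_mul, map_add, map_add, Finsupp.add_apply, Finsupp.add_apply,
        hx, hy, add_mul]
  have ET : ∀ (c d : A) (x : A ⊗[K] B) (i : ι),
      e ((c ⊗ₜ[K] (1 : B)) * x * (d ⊗ₜ[K] (1 : B))) i = c * e x i * d := by
    intro c d x i
    rw [E3, E2]
  have hAnt : Nontrivial A := inferInstance
  have hBnt : Nontrivial B := inferInstance
  have hone : (1 : A ⊗[K] B) ≠ 0 := by
    intro h
    have h1 : ∀ i, 𝒷.repr (1 : B) i • (1 : A) = 0 := by
      intro i
      rw [← E1 1 1 i, ← Algebra.TensorProduct.one_def, h, map_zero, Finsupp.zero_apply]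
    have h2 : 𝒷.repr (1 : B) = 0 := by
      ext i
      rcases smul_eq_zero.mp (h1 i) with h' | h'
      · simpa using h'
      · exact absurd h' one_ne_zero
    have h3 : (1 : B) = 0 := by
      have := congrArg 𝒷.repr.symm h2
      simpa using this
    exact one_ne_zero h3
  have : Nontrivial (A ⊗[K] B) := ⟨1, 0, hone⟩
  refine IsSimpleRing.of_eq_bot_or_eq_top fun I => ?_
  rw [or_iff_not_imp_left, ← I.one_mem_iff]
  intro hI
  -- a nonzero element of I
  obtain ⟨x₀, hx₀I, hx₀⟩ : ∃ x ∈ I, x ≠ 0 := by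
    obtain ⟨x, hxI, hx⟩ := SetLike.exists_of_lt (bot_lt_iff_ne_bot.mpr hI : ⊥ < I)
    refine ⟨x, hxI, fun h => hx ?_⟩
    rw [h]
    exact TwoSidedIdeal.zero_mem _
  have hex : ∃ n, ∃ x, x ∈ I ∧ x ≠ 0 ∧ (e x).support.card = n :=
    ⟨_, x₀, hx₀I, hx₀, rfl⟩
  obtain ⟨x, hxI, hx0, hcard⟩ := Nat.find_spec hex
  have hmin : ∀ w ∈ I, w ≠ 0 → (e x).support.card ≤ (e w).support.card := by
    intro w hwI hw0
    rw [hcard]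
    exact Nat.find_le ⟨w, hwI, hw0, rfl⟩
  -- the support is nonempty
  have hexne : e x ≠ 0 := fun h => hx0 (by simpa using congrArg e.symm h)
  obtain ⟨i₀, hi₀⟩ := Finsupp.support_nonempty_iff.mpr hexne
  have ha : e x i₀ ≠ 0 := Finsupp.mem_support_iff.mp hi₀
  obtain ⟨l, hl⟩ := exists_list_sum_eq_one' ha
  set y : A ⊗[K] B := (l.map fun p => (p.1 ⊗ₜ[K] (1 : B)) * x * (p.2 ⊗ₜ[K] (1 : B))).sum with hy
  have hyI : y ∈ I := by
    refine TwoSidedIdeal.list_sum_mem' I _ ?_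
    intro r hr
    simp only [List.mem_map] at hr
    obtain ⟨p, _, rfl⟩ := hr
    exact I.mul_mem_right _ _ (I.mul_mem_left _ _ hxI)
  have hsum : ∀ (L : List (A × A)) (i : ι),
      e ((L.map fun p => (p.1 ⊗ₜ[K] (1 : B)) * x * (p.2 ⊗ₜ[K] (1 : B))).sum) i =
        (L.map fun p => p.1 * e x i * p.2).sum := by
    intro L i
    induction L with
    | nil => simp
    | cons p L ih =>
      simp only [List.map_cons, List.sum_cons, map_add, Finsupp.add_apply, ih, ET]
  have hey : ∀ i, e y i = (l.map fun p => p.1 * e x i * p.2).sum := fun i => hsum l i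
  have hyi₀ : e y i₀ = 1 := by rw [hey, hl]
  have hy0 : y ≠ 0 := by
    intro h
    rw [h, map_zero, Finsupp.zero_apply] at hyi₀
    exact zero_ne_one hyi₀
  have hzero : ∀ i, e x i = 0 → e y i = 0 := by
    intro i h
    rw [hey, h]
    have : (l.map fun p => p.1 * (0 : A) * p.2) = l.map fun _ => (0 : A) := by
      simp
    rw [this]
    induction l with
    | nil => simp
    | cons p l ih => simpa using ih
  have hsub : (e y).support ⊆ (e x).support := by
    intro i hi
    rw [Finsupp.mem_support_iff] at hi ⊢
    exact fun h => hi (hzero i h)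
  have hylen : (e y).support.card = (e x).support.card :=
    le_antisymm (Finset.card_le_card hsub) (hmin y hyI hy0)
  have hsupp_eq : (e y).support = (e x).support :=
    Finset.eq_of_subset_of_card_le hsub (le_of_eq hylen.symm)
  -- the coefficients of y are central
  have hcomm : ∀ (c : A) (i : ι), c * e y i = e y i * c := by
    intro c
    set z : A ⊗[K] B := (c ⊗ₜ[K] (1 : B)) * y - y * (c ⊗ₜ[K] (1 : B)) with hzdef
    have hzI : z ∈ I := I.sub_mem (I.mul_mem_left _ _ hyI) (I.mul_mem_right _ _ hyI)
    have hz : ∀ i, e z i = c * e y i - e y i * c := by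
      intro i
      rw [hzdef, map_sub, Finsupp.sub_apply, E2, E3]
    have hz0 : z = 0 := by
      by_contra h
      have hzi₀ : e z i₀ = 0 := by rw [hz, hyi₀, mul_one, one_mul, sub_self]
      have hzsub : (e z).support ⊆ (e y).support.erase i₀ := by
        intro i hi
        rw [Finsupp.mem_support_iff] at hi
        rw [Finset.mem_erase, Finsupp.mem_support_iff]
        constructor
        · rintro rfl; exact hi hzi₀
        · intro h'
          exact hi (by rw [hz, h', mul_zero, zero_mul, sub_self])
      have hi₀y : i₀ ∈ (e y).support := by
        rw [Finsupp.mem_support_iff, hyi₀]; exact one_ne_zero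
      have hlt : (e z).support.card < (e x).support.card := by
        calc (e z).support.card ≤ ((e y).support.erase i₀).card :=
              Finset.card_le_card hzsub
          _ < (e y).support.card := Finset.card_erase_lt_of_mem hi₀y
          _ = (e x).support.card := hylen
      exact absurd (hmin z hzI h) (Nat.not_le.mpr hlt)
    intro i
    have := hz i
    rw [hz0, map_zero, Finsupp.zero_apply] at this
    exact sub_eq_zero.mp this.symm
  -- each coefficient is a scalar
  have hk : ∀ i, ∃ k : K, e y i = algebraMap K A k := by
    intro i
    exact hcentral (e y i) fun c => (hcomm c i).symm
  choose k hkk using hk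
  -- y = 1 ⊗ b
  set b : B := (e y).support.sum fun i => k i • 𝒷 i with hbdef
  have hrepr : ∀ j, 𝒷.repr b j = if j ∈ (e y).support then k j else 0 := by
    intro j
    rw [hbdef, map_sum]
    rw [Finsupp.finset_sum_apply]
    have : ∀ i ∈ (e y).support, (𝒷.repr (k i • 𝒷 i)) j = if i = j then k i else 0 := by
      intro i _
      rw [map_smul, Module.Basis.repr_self, Finsupp.smul_apply, Finsupp.single_apply]
      simp [mul_ite]
    rw [Finset.sum_congr rfl this, Finset.sum_ite_eq']
  have hby : (1 : A) ⊗ₜ[K] b = y := by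
    apply e.injective
    ext j
    rw [E1, hrepr]
    by_cases hj : j ∈ (e y).support
    · rw [if_pos hj, hkk j, Algebra.algebraMap_eq_smul_one]
    · rw [if_neg hj, zero_smul]
      exact (Finsupp.notMem_support_iff.mp hj).symm
  have hbne : b ≠ 0 := by
    intro h
    rw [h, TensorProduct.tmul_zero] at hby
    exact hy0 hby.symm
  obtain ⟨l', hl'⟩ := exists_list_sum_eq_one' hbne
  have h1 : (1 : A ⊗[K] B) =
      (l'.map fun p => ((1 : A) ⊗ₜ[K] p.1) * y * ((1 : A) ⊗ₜ[K] p.2)).sum := by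
    have hterm : ∀ p : B × B,
        ((1 : A) ⊗ₜ[K] p.1) * y * ((1 : A) ⊗ₜ[K] p.2) = (1 : A) ⊗ₜ[K] (p.1 * b * p.2) := by
      intro p
      rw [← hby, Algebra.TensorProduct.tmul_mul_tmul, Algebra.TensorProduct.tmul_mul_tmul,
        one_mul, one_mul]
    rw [show (l'.map fun p => ((1 : A) ⊗ₜ[K] p.1) * y * ((1 : A) ⊗ₜ[K] p.2)) =
        l'.map fun p => (1 : A) ⊗ₜ[K] (p.1 * b * p.2) from List.map_congr_left fun p _ => hterm p]
    have : ∀ l'' : List (B × B), (l''.map fun p => (1 : A) ⊗ₜ[K] (p.1 * b * p.2)).sum =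
        (1 : A) ⊗ₜ[K] (l''.map fun p => p.1 * b * p.2).sum := by
      intro l''
      induction l'' with
      | nil => simp
      | cons p l'' ih => simp [ih, TensorProduct.tmul_add]
    rw [this, hl', Algebra.TensorProduct.one_def]
  rw [h1]
  refine TwoSidedIdeal.list_sum_mem' I _ ?_
  intro r hr
  simp only [List.mem_map] at hr
  obtain ⟨p, _, rfl⟩ := hr
  exact I.mul_mem_right _ _ (I.mul_mem_left _ _ hyI)

/-- In a simple unital complex C*-algebra, central elements are scalars. -/
lemma central_of_simple_cstar (A : Type*) [CStarAlgebra A] [IsSimpleRing A] (a : A)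
    (h : ∀ c : A, a * c = c * a) : ∃ k : ℂ, a = algebraMap ℂ A k := by
  have : Nontrivial A := inferInstance
  obtain ⟨lam, hlam⟩ := spectrum.nonempty a
  rw [spectrum.mem_iff] at hlam
  refine ⟨lam, ?_⟩
  by_contra hcon
  set z : A := algebraMap ℂ A lam - a with hzdef
  have hz : z ≠ 0 := by
    intro h0
    rw [hzdef, sub_eq_zero] at h0
    exact hcon h0.symm
  have hmem : z ∈ Subring.center A := by
    rw [Subring.mem_center_iff]
    intro g
    simp only [hzdef, mul_sub, sub_mul, Algebra.commutes, h g]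
  have hz' : (⟨z, hmem⟩ : Subring.center A) ≠ 0 := by
    simpa [Subtype.ext_iff] using hz
  obtain ⟨⟨w, hw⟩, hzw⟩ := (IsSimpleRing.isField_center A).mul_inv_cancel hz'
  have hzw' : z * w = 1 := congrArg Subtype.val hzw
  have hwz : w * z = 1 := by
    rw [Subring.mem_center_iff.mp hmem w]
    exact hzw'
  exact hlam ⟨⟨z, w, hzw', hwz⟩, rfl⟩

/-- The algebraic tensor product `A ⊗[ℂ] B` of two complex algebras, written with the `ℂ`-module
structures coming from the algebra structures (this is the usual algebraic tensor product; being
explicit about the module structures merely assists instance resolution). -/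
noncomputable abbrev AlgTensor (A B : Type*) [Ring A] [Algebra ℂ A] [Ring B] [Algebra ℂ B] :
    Type _ :=
  @TensorProduct ℂ _ A B _ _ Algebra.toModule Algebra.toModule

/-- **Statement 8.** If `A` and `B` are unital complex C*-algebras, each simple as a ring,
then the algebraic tensor product `A ⊗[ℂ] B` is a simple ring. -/
theorem isSimpleRing_tensorProduct_of_cstarAlgebras
    (A B : Type*) [CStarAlgebra A] [CStarAlgebra B]
    (hA : IsSimpleRing A) (hB : IsSimpleRing B) :
    IsSimpleRing (AlgTensor A B) := by
  haveI := hA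
  haveI := hB
  exact isSimpleRing_tensor_aux ℂ A B hA hB (central_of_simple_cstar A)
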